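/- For coprime positive integers p_1 > p_2, there are exactly p_1 − p_2 + 1 distinct apportionment sequences over cut points c ∈ [0,1] for the two-party stationary divisor methods. -/

import Mathlib

open ENNReal

/-- Number of seats party `i` holds after the first `h` seats of sequence `s`. -/
def alloc {n : ℕ} (s : ℕ → Fin n) (i : Fin n) (h : ℕ) : ℕ :=
  ((Finset.range h).filter (fun t => s t = i)).card

/-- `s` is the apportionment sequence of the stationary divisor method with cut
point `c` for votes `p`: each seat goes to the party maximizing `pᵢ/(aᵢ+c)`
(computed in `ℝ≥0∞`, so that `pᵢ/0 = ∞` encodes the Adams convention), with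
ties broken in favor of the smaller index. -/
def IsStationarySeq {n : ℕ} (p : Fin n → ℕ) (c : NNReal) (s : ℕ → Fin n) : Prop :=
  ∀ h : ℕ, ∀ j : Fin n,
    (p j : ℝ≥0∞) / ((alloc s j h : ℝ≥0∞) + (c : ℝ≥0∞)) <
        (p (s h) : ℝ≥0∞) / ((alloc s (s h) h : ℝ≥0∞) + (c : ℝ≥0∞)) ∨
    ((p (s h) : ℝ≥0∞) / ((alloc s (s h) h : ℝ≥0∞) + (c : ℝ≥0∞)) =
        (p j : ℝ≥0∞) / ((alloc s j h : ℝ≥0∞) + (c : ℝ≥0∞)) ∧ s h ≤ j)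

namespace TwoPartyAux

open scoped NNReal

/-- running count of seats of party 0 under integer threshold `k`. -/
def A (p1 p2 : ℕ) (k : ℤ) : ℕ → ℕ
  | 0 => 0
  | h + 1 => A p1 p2 k h +
      (if -k ≤ (p1 : ℤ) * h - ((p1 : ℤ) + p2) * (A p1 p2 k h) then 1 else 0)

/-- the apportionment sequence for integer threshold `k`. -/
def seqk (p1 p2 : ℕ) (k : ℤ) (h : ℕ) : Fin 2 :=
  if -k ≤ (p1 : ℤ) * h - ((p1 : ℤ) + p2) * (A p1 p2 k h) then 0 else 1

lemma alloc_succ {n : ℕ} (s : ℕ → Fin n) (i : Fin n) (h : ℕ) :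
    alloc s i (h + 1) = alloc s i h + if s h = i then 1 else 0 := by
  unfold alloc
  rw [Finset.range_add_one, Finset.filter_insert]
  split
  · rw [Finset.card_insert_of_notMem (by simp)]
  · rw [add_zero]

lemma fin2 (x : Fin 2) : x = 0 ∨ x = 1 := by omega

lemma alloc_add (s : ℕ → Fin 2) (h : ℕ) : alloc s 0 h + alloc s 1 h = h := by
  induction h with
  | zero => rfl
  | succ n ih =>
    rw [alloc_succ, alloc_succ]
    rcases fin2 (s n) with hs | hs <;> simp [hs] <;> omega

lemma alloc_seqk (p1 p2 : ℕ) (k : ℤ) (h : ℕ) :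
    alloc (seqk p1 p2 k) 0 h = A p1 p2 k h := by
  induction h with
  | zero => rfl
  | succ n ih =>
    rw [alloc_succ, ih, A]
    unfold seqk
    split_ifs <;> simp_all

/-- cross-multiplication in `ℝ≥0∞`. -/
lemma div_cross (p q a b : ℕ) (c : NNReal) (hp : 0 < p) (hq : 0 < q) :
    (q : ℝ≥0∞) / ((b : ℝ≥0∞) + (c : ℝ≥0∞)) ≤ (p : ℝ≥0∞) / ((a : ℝ≥0∞) + (c : ℝ≥0∞)) ↔
      (q : ℝ) * ((a : ℝ) + (c : ℝ)) ≤ (p : ℝ) * ((b : ℝ) + (c : ℝ)) := by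
  have hx : ((a : ℝ≥0∞) + (c : ℝ≥0∞)) = (((a : ℝ≥0) + c : ℝ≥0) : ℝ≥0∞) := by push_cast; ring
  have hy : ((b : ℝ≥0∞) + (c : ℝ≥0∞)) = (((b : ℝ≥0) + c : ℝ≥0) : ℝ≥0∞) := by push_cast; ring
  have key : ∀ x y : ℝ≥0,
      ((q : ℝ≥0∞) / (y : ℝ≥0∞) ≤ (p : ℝ≥0∞) / (x : ℝ≥0∞) ↔ q * x ≤ p * y) := by
    intro x y
    by_cases hx0 : x = 0
    · subst hx0
      simp only [ENNReal.coe_zero, ENNReal.div_zero (by exact_mod_cast hp.ne' : (p : ℝ≥0∞) ≠ 0)]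
      simp
    · by_cases hy0 : y = 0
      · subst hy0
        simp only [ENNReal.coe_zero, ENNReal.div_zero (by exact_mod_cast hq.ne' : (q : ℝ≥0∞) ≠ 0)]
        constructor
        · intro hle
          exact absurd (top_le_iff.mp hle)
            (ENNReal.div_lt_top (by simp) (by exact_mod_cast hx0)).ne
        · intro hle
          exact absurd hle (by
            simp only [mul_zero, nonpos_iff_eq_zero, mul_eq_zero, not_or]
            exact ⟨Nat.cast_ne_zero.mpr hq.ne', hx0⟩)
      · rw [ENNReal.div_le_iff (by exact_mod_cast hy0) ENNReal.coe_ne_top,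
          ← ENNReal.mul_div_right_comm,
          ENNReal.le_div_iff_mul_le (Or.inl (by exact_mod_cast hx0)) (Or.inl ENNReal.coe_ne_top)]
        constructor
        · intro hle; exact_mod_cast hle
        · intro hle; exact_mod_cast hle
  rw [hx, hy, key ((a : ℝ≥0) + c) ((b : ℝ≥0) + c)]
  constructor
  · intro hle
    have := (NNReal.coe_le_coe).mpr hle
    push_cast at this
    linarith
  · intro hle
    have : (q : ℝ) * ((a : ℝ≥0) + c : ℝ≥0) ≤ (p : ℝ) * ((b : ℝ≥0) + c : ℝ≥0) := by
      push_cast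
      linarith
    exact_mod_cast this

/-- the inequality defining the sequence, in integer form. -/
lemma step_iff (p1 p2 : ℕ) (hp2 : 0 < p2) (h12 : p2 < p1) (c : NNReal)
    (a b h : ℕ) (hab : a + b = h) :
    ((p2 : ℝ≥0∞) / ((b : ℝ≥0∞) + (c : ℝ≥0∞)) ≤ (p1 : ℝ≥0∞) / ((a : ℝ≥0∞) + (c : ℝ≥0∞))) ↔
      -(⌊(c : ℝ) * ((p1 : ℝ) - (p2 : ℝ))⌋) ≤ (p1 : ℤ) * h - ((p1 : ℤ) + p2) * a := by
  have hp1 : 0 < p1 := hp2.trans h12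
  have hD : (((p1 : ℤ) * h - ((p1 : ℤ) + p2) * a : ℤ) : ℝ) =
      (p1 : ℝ) * (b : ℝ) - (p2 : ℝ) * (a : ℝ) := by
    rw [← hab]; push_cast; ring
  rw [div_cross p1 p2 a b c hp1 hp2, ← Int.ceil_neg, Int.ceil_le, hD]
  constructor <;> intro hle <;> [nlinarith; nlinarith]

lemma isStationary_iff (p1 p2 : ℕ) (hp2 : 0 < p2) (h12 : p2 < p1) (c : NNReal)
    (s : ℕ → Fin 2) :
    IsStationarySeq ![p1, p2] c s ↔
      ∀ h : ℕ, s h = if -(⌊(c : ℝ) * ((p1 : ℝ) - (p2 : ℝ))⌋) ≤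
          (p1 : ℤ) * h - ((p1 : ℤ) + p2) * (alloc s 0 h) then 0 else 1 := by
  have key : ∀ h : ℕ,
      (((p2 : ℝ≥0∞) / ((alloc s 1 h : ℝ≥0∞) + c) ≤ (p1 : ℝ≥0∞) / ((alloc s 0 h : ℝ≥0∞) + c)) ↔
        -(⌊(c : ℝ) * ((p1 : ℝ) - (p2 : ℝ))⌋) ≤
          (p1 : ℤ) * h - ((p1 : ℤ) + p2) * (alloc s 0 h)) :=
    fun h => step_iff p1 p2 hp2 h12 c (alloc s 0 h) (alloc s 1 h) h (alloc_add s h)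
  constructor
  · intro H h
    have H0 := H h 0
    have H1 := H h 1
    rcases fin2 (s h) with hs | hs <;> rw [hs] at H0 H1 ⊢
    · rw [if_pos]
      rw [← key h]
      simp only [Matrix.cons_val_zero, Matrix.cons_val_one, Matrix.head_cons] at H1
      rcases H1 with h' | ⟨h', _⟩
      · exact le_of_lt h'
      · exact le_of_eq h'.symm
    · rw [if_neg]
      intro hcond
      have hle := (key h).mpr hcond
      simp only [Matrix.cons_val_zero, Matrix.cons_val_one, Matrix.head_cons] at H0
      rcases H0 with h' | ⟨_, h'⟩
      · exact absurd hle (not_le.mpr h')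
      · exact absurd h' (by decide)
  · intro H h j
    have Hh := H h
    by_cases hc : -(⌊(c : ℝ) * ((p1 : ℝ) - (p2 : ℝ))⌋) ≤
        (p1 : ℤ) * h - ((p1 : ℤ) + p2) * (alloc s 0 h)
    · rw [if_pos hc] at Hh
      have hle := (key h).mpr hc
      rcases fin2 j with hj | hj <;> subst hj <;> rw [Hh]
      · right; exact ⟨rfl, le_refl _⟩
      · simp only [Matrix.cons_val_zero, Matrix.cons_val_one, Matrix.head_cons]
        rcases lt_or_eq_of_le hle with h' | h'
        · left; exact h'
        · right; exact ⟨h'.symm, by decide⟩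
    · rw [if_neg hc] at Hh
      have hlt : (p1 : ℝ≥0∞) / ((alloc s 0 h : ℝ≥0∞) + c) <
          (p2 : ℝ≥0∞) / ((alloc s 1 h : ℝ≥0∞) + c) :=
        not_le.mp (fun hle => hc ((key h).mp hle))
      rcases fin2 j with hj | hj <;> subst hj <;> rw [Hh]
      · simp only [Matrix.cons_val_zero, Matrix.cons_val_one, Matrix.head_cons]
        left; exact hlt
      · right; exact ⟨rfl, le_refl _⟩

lemma seq_unique (p1 p2 : ℕ) (k : ℤ) (s : ℕ → Fin 2)
    (hs : ∀ h : ℕ, s h = if -k ≤ (p1 : ℤ) * h - ((p1 : ℤ) + p2) * (alloc s 0 h)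
      then 0 else 1) :
    s = seqk p1 p2 k := by
  have key : ∀ h : ℕ, alloc s 0 h = A p1 p2 k h := by
    intro h
    induction h with
    | zero => rfl
    | succ n ih =>
      rw [alloc_succ, ih, A, hs n, ih]
      split_ifs <;> simp_all
  funext h
  rw [hs h, key h, seqk]

lemma D_bound (p1 p2 : ℕ) (hp2 : 0 < p2) (h12 : p2 < p1) (K : ℕ) (hK : K ≤ p1 - p2)
    (h : ℕ) :
    -(K : ℤ) - p2 ≤ (p1 : ℤ) * h - ((p1 : ℤ) + p2) * (A p1 p2 (K : ℤ) h) ∧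
      (p1 : ℤ) * h - ((p1 : ℤ) + p2) * (A p1 p2 (K : ℤ) h) ≤ (p1 : ℤ) - K - 1 := by
  have hK' : (K : ℤ) ≤ (p1 : ℤ) - (p2 : ℤ) := by omega
  have hp2' : (1 : ℤ) ≤ (p2 : ℤ) := by omega
  induction h with
  | zero => simp [A]; omega
  | succ h ih =>
    obtain ⟨ih1, ih2⟩ := ih
    have e : (A p1 p2 (K : ℤ) (h + 1) : ℤ) = (A p1 p2 (K : ℤ) h : ℤ) +
        (if -(K : ℤ) ≤ (p1 : ℤ) * h - ((p1 : ℤ) + p2) * (A p1 p2 (K : ℤ) h)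
          then 1 else 0) := by
      rw [A]; split_ifs <;> push_cast <;> ring
    split_ifs at e with hc <;> rw [e] <;> push_cast <;>
      constructor <;> linarith

lemma exists_hit (p1 p2 : ℕ) (hco : Nat.Coprime p1 p2) (hp2 : 0 < p2) (r : ℤ) :
    ∃ h : ℕ, ((p1 : ℤ) + p2) ∣ ((p1 : ℤ) * h - r) := by
  haveI : NeZero (p1 + p2) := ⟨by omega⟩
  have hcop : Nat.Coprime p1 (p1 + p2) := by
    rw [add_comm]
    exact (Nat.coprime_add_self_right).mpr hco
  set u := ZMod.unitOfCoprime p1 hcop with hu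
  set x : ZMod (p1 + p2) := ((u⁻¹ : (ZMod (p1 + p2))ˣ) : ZMod (p1 + p2)) * (r : ZMod (p1 + p2))
    with hx
  refine ⟨x.val, ?_⟩
  have hcast : (((p1 : ℤ) * (x.val : ℕ) - r : ℤ) : ZMod (p1 + p2)) = 0 := by
    push_cast
    rw [ZMod.natCast_rightInverse x, hx, ← mul_assoc]
    have : ((p1 : ZMod (p1 + p2))) * ((u⁻¹ : (ZMod (p1 + p2))ˣ) : ZMod (p1 + p2)) = 1 := by
      rw [← ZMod.coe_unitOfCoprime p1 hcop, ← hu, ← Units.val_mul, mul_inv_cancel, Units.val_one]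
    rw [this, one_mul, sub_self]
  have := (ZMod.intCast_zmod_eq_zero_iff_dvd _ (p1 + p2)).mp hcast
  exact_mod_cast this

lemma seqk_ne (p1 p2 : ℕ) (hco : Nat.Coprime p1 p2) (hp2 : 0 < p2) (h12 : p2 < p1)
    (K K' : ℕ) (hK : K < K') (hK' : K' ≤ p1 - p2) :
    seqk p1 p2 (K : ℤ) ≠ seqk p1 p2 (K' : ℤ) := by
  obtain ⟨h, hdvd⟩ := exists_hit p1 p2 hco hp2 (-(K : ℤ) - 1)
  intro heq
  have hm : (0 : ℤ) < (p1 : ℤ) + p2 := by positivity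
  have hKK : (K : ℤ) < (K' : ℤ) := by exact_mod_cast hK
  have hK2 : (K' : ℤ) ≤ (p1 : ℤ) - p2 := by omega
  have hp2' : (1 : ℤ) ≤ (p2 : ℤ) := by omega
  obtain ⟨hb1, hb2⟩ := D_bound p1 p2 hp2 h12 K (le_of_lt (lt_of_lt_of_le hK hK')) h
  obtain ⟨hb1', hb2'⟩ := D_bound p1 p2 hp2 h12 K' hK' h
  have hDK : (p1 : ℤ) * h - ((p1 : ℤ) + p2) * (A p1 p2 (K : ℤ) h) = -(K : ℤ) - 1 := by
    have hdvd' : ((p1 : ℤ) + p2) ∣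
        ((p1 : ℤ) * h - ((p1 : ℤ) + p2) * (A p1 p2 (K : ℤ) h) - (-(K : ℤ) - 1)) := by
      have : (p1 : ℤ) * h - ((p1 : ℤ) + p2) * (A p1 p2 (K : ℤ) h) - (-(K : ℤ) - 1) =
          ((p1 : ℤ) * h - (-(K : ℤ) - 1)) - ((p1 : ℤ) + p2) * (A p1 p2 (K : ℤ) h) := by ring
      rw [this]
      exact hdvd.sub (dvd_mul_right _ _)
    obtain ⟨t, ht⟩ := hdvd'
    have h1 : ((p1 : ℤ) + p2) * t < ((p1 : ℤ) + p2) * 1 := by linarith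
    have h2 : ((p1 : ℤ) + p2) * (-1) < ((p1 : ℤ) + p2) * t := by linarith
    have ht1 : t < 1 := lt_of_mul_lt_mul_left h1 (le_of_lt hm)
    have ht2 : -1 < t := lt_of_mul_lt_mul_left h2 (le_of_lt hm)
    have : t = 0 := by omega
    rw [this, mul_zero] at ht
    linarith
  have hDK' : (p1 : ℤ) * h - ((p1 : ℤ) + p2) * (A p1 p2 (K' : ℤ) h) = -(K : ℤ) - 1 := by
    have hdvd' : ((p1 : ℤ) + p2) ∣
        ((p1 : ℤ) * h - ((p1 : ℤ) + p2) * (A p1 p2 (K' : ℤ) h) - (-(K : ℤ) - 1)) := by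
      have : (p1 : ℤ) * h - ((p1 : ℤ) + p2) * (A p1 p2 (K' : ℤ) h) - (-(K : ℤ) - 1) =
          ((p1 : ℤ) * h - (-(K : ℤ) - 1)) - ((p1 : ℤ) + p2) * (A p1 p2 (K' : ℤ) h) := by ring
      rw [this]
      exact hdvd.sub (dvd_mul_right _ _)
    obtain ⟨t, ht⟩ := hdvd'
    have h1 : ((p1 : ℤ) + p2) * t < ((p1 : ℤ) + p2) * 1 := by linarith
    have h2 : ((p1 : ℤ) + p2) * (-1) < ((p1 : ℤ) + p2) * t := by linarith
    have ht1 : t < 1 := lt_of_mul_lt_mul_left h1 (le_of_lt hm)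
    have ht2 : -1 < t := lt_of_mul_lt_mul_left h2 (le_of_lt hm)
    have : t = 0 := by omega
    rw [this, mul_zero] at ht
    linarith
  have e1 : seqk p1 p2 (K : ℤ) h = 1 := by
    unfold seqk
    rw [hDK, if_neg (by omega)]
  have e2 : seqk p1 p2 (K' : ℤ) h = 0 := by
    unfold seqk
    rw [hDK', if_pos (by omega)]
  have := congrFun heq h
  rw [e1, e2] at this
  exact absurd this (by decide)

end TwoPartyAux

open TwoPartyAux
/-- For coprime `p_1 > p_2`, there are exactly `p_1 − p_2 + 1` distinct
two-party apportionment sequences arising from stationary divisor methods with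
cut points `c ∈ [0,1]`. -/
theorem count_two_party_sequences (p1 p2 : ℕ) (hco : Nat.Coprime p1 p2)
    (hp2 : 0 < p2) (h12 : p2 < p1) :
    Set.ncard { s : ℕ → Fin 2 | ∃ c : NNReal, c ≤ 1 ∧ IsStationarySeq ![p1, p2] c s } =
      p1 - p2 + 1 := by
  classical
  have hp1 : 0 < p1 := hp2.trans h12
  have hset : { s : ℕ → Fin 2 | ∃ c : NNReal, c ≤ 1 ∧ IsStationarySeq ![p1, p2] c s } =
      ↑((Finset.range (p1 - p2 + 1)).image (fun K : ℕ => seqk p1 p2 (K : ℤ))) := by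
    ext s
    simp only [Set.mem_setOf_eq, Finset.coe_image, Set.mem_image, Finset.mem_coe,
      Finset.mem_range]
    constructor
    · rintro ⟨c, hc1, hc⟩
      set k : ℤ := ⌊(c : ℝ) * ((p1 : ℝ) - (p2 : ℝ))⌋ with hk
      have hsub : (0:ℝ) ≤ (p1 : ℝ) - (p2 : ℝ) := by
        have : (p2 : ℝ) ≤ (p1 : ℝ) := by exact_mod_cast h12.le
        linarith
      have hk0 : 0 ≤ k := Int.floor_nonneg.mpr (mul_nonneg c.coe_nonneg hsub)
      have hkle : k ≤ (p1 : ℤ) - p2 := by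
        have hcle : (c : ℝ) ≤ 1 := by exact_mod_cast hc1
        have hle : (c : ℝ) * ((p1 : ℝ) - (p2 : ℝ)) ≤ (p1 : ℝ) - (p2 : ℝ) :=
          mul_le_of_le_one_left hsub hcle
        have := Int.floor_le_floor hle
        rw [hk]
        refine this.trans ?_
        have : ((p1 : ℝ) - (p2 : ℝ)) = (((p1 : ℤ) - (p2 : ℤ) : ℤ) : ℝ) := by push_cast; ring
        rw [this, Int.floor_intCast]
      have hseq : s = seqk p1 p2 k :=
        seq_unique p1 p2 k s ((isStationary_iff p1 p2 hp2 h12 c s).mp hc)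
      refine ⟨k.toNat, by omega, ?_⟩
      show seqk p1 p2 ((k.toNat : ℕ) : ℤ) = s
      rw [Int.toNat_of_nonneg hk0]
      exact hseq.symm
    · rintro ⟨K, hKlt, hs⟩
      have hKle : K ≤ p1 - p2 := by omega
      have hd : (0:ℝ) < ((p1 - p2 : ℕ) : ℝ) := by
        have : 0 < p1 - p2 := by omega
        exact_mod_cast this
      set c : NNReal := (K : NNReal) / ((p1 - p2 : ℕ) : NNReal) with hc
      have hcr : (c : ℝ) = (K : ℝ) / ((p1 - p2 : ℕ) : ℝ) := by
        rw [hc, NNReal.coe_div]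
        norm_cast
      have hfloor : ⌊(c : ℝ) * ((p1 : ℝ) - (p2 : ℝ))⌋ = (K : ℤ) := by
        have hsub : ((p1 - p2 : ℕ) : ℝ) = (p1 : ℝ) - (p2 : ℝ) := by
          rw [Nat.cast_sub (le_of_lt h12)]
        rw [hcr, ← hsub, div_mul_cancel₀ _ (ne_of_gt hd)]
        exact_mod_cast Int.floor_natCast K
      refine ⟨c, ?_, ?_⟩
      · rw [hc]
        exact div_le_one_of_le₀ (by exact_mod_cast hKle) (by positivity)
      · rw [← hs]
        apply (isStationary_iff p1 p2 hp2 h12 c _).mpr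
        intro h
        rw [hfloor, alloc_seqk]
        rfl
  rw [hset, Set.ncard_coe_finset, Finset.card_image_of_injOn, Finset.card_range]
  intro K hK K' hK' hfe
  rw [Finset.mem_coe, Finset.mem_range] at hK hK'
  by_contra hne
  rcases Nat.lt_or_ge K K' with hlt | hge
  · exact seqk_ne p1 p2 hco hp2 h12 K K' hlt (by omega) hfe
  · have hlt : K' < K := by omega
    exact seqk_ne p1 p2 hco hp2 h12 K' K hlt (by omega) hfe.symm
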